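/- arXiv:2212.08648 — 2 statements merged into one kernel-verified Lean document; each statement's English description precedes it below -/
import Mathlib

section
/- Let k ≥ 1 and n ≥ 1 with n < 2k. Then the complex vector space of matrices f : (Fin k → Fin n) × (Fin k → Fin n) → ℂ satisfying f(σ ∘ I, σ ∘ J) = f(I, J) for all σ ∈ S_n has dimension Bell(2k, n), which is strictly less than Bell(2k); in particular the difference Bell(2k) − Bell(2k, n) is positive. -/
noncomputable section

open Function Set

section Helpers

variable {m n : ℕ}

/-- If two maps have the same kernel, they differ by a permutation of the target. -/
lemma exists_perm_of_ker_eq {I J : Fin m → Fin n}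
    (h : Setoid.ker I = Setoid.ker J) : ∃ σ : Equiv.Perm (Fin n), ⇑σ ∘ I = J := by
  classical
  have hker : ∀ a b, I a = I b ↔ J a = J b := by
    intro a b
    constructor
    · intro hab; exact Setoid.ker_def.mp (h ▸ Setoid.ker_def.mpr hab)
    · intro hab; exact Setoid.ker_def.mp (h.symm ▸ Setoid.ker_def.mpr hab)
  set φ : Set.range I → Set.range J := fun x =>
    ⟨J (Classical.choose x.2), Set.mem_range_self _⟩ with hφ
  have hφval : ∀ (a : Fin m) (hx : I a ∈ Set.range I), (φ ⟨I a, hx⟩ : Fin n) = J a := by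
    intro a hx
    have := Classical.choose_spec hx
    exact (hker _ _).mp this
  have hinj : Function.Injective φ := by
    rintro ⟨x, a, rfl⟩ ⟨y, b, rfl⟩ hxy
    have h1 : J (Classical.choose (⟨a, rfl⟩ : I a ∈ Set.range I)) = J a :=
      (hker _ _).mp (Classical.choose_spec (⟨a, rfl⟩ : I a ∈ Set.range I))
    have h2 : J (Classical.choose (⟨b, rfl⟩ : I b ∈ Set.range I)) = J b :=
      (hker _ _).mp (Classical.choose_spec (⟨b, rfl⟩ : I b ∈ Set.range I))
    have : J a = J b := by
      have := congrArg Subtype.val hxy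
      simp only [hφ] at this
      rw [h1, h2] at this
      exact this
    exact Subtype.ext ((hker a b).mpr this)
  have hsurj : Function.Surjective φ := by
    rintro ⟨z, a, rfl⟩
    refine ⟨⟨I a, Set.mem_range_self a⟩, ?_⟩
    exact Subtype.ext (hφval a _)
  set e : Set.range I ≃ Set.range J := Equiv.ofBijective φ ⟨hinj, hsurj⟩ with he
  have hcard : Fintype.card (↥(Set.range I)ᶜ) = Fintype.card (↥(Set.range J)ᶜ) := by
    rw [Fintype.card_compl_set, Fintype.card_compl_set, Fintype.card_congr e]
  set ec : (↥(Set.range I)ᶜ) ≃ (↥(Set.range J)ᶜ) := Fintype.equivOfCardEq hcard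
  refine ⟨(Equiv.Set.sumCompl (Set.range I)).symm.trans
    ((e.sumCongr ec).trans (Equiv.Set.sumCompl (Set.range J))), ?_⟩
  funext a
  simp only [Function.comp_apply, Equiv.coe_trans]
  rw [Equiv.Set.sumCompl_symm_apply_of_mem (Set.mem_range_self a)]
  simp only [Equiv.sumCongr_apply, Sum.map_inl, Function.comp_apply]
  rw [Equiv.Set.sumCompl_apply_inl]
  exact hφval a _

/-- Index set: setoids with at most `n` classes. -/
abbrev PartLE (m n : ℕ) := {π : Setoid (Fin m) // Nat.card (Quotient π) ≤ n}

instance : Finite (Setoid (Fin m)) :=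
  Finite.of_injective (fun s : Setoid (Fin m) => ⇑s)
    (fun s t hst => Setoid.ext fun a b => iff_of_eq (congrFun (congrFun hst a) b))

lemma ker_card_le (I : Fin m → Fin n) : Nat.card (Quotient (Setoid.ker I)) ≤ n := by
  rw [Nat.card_congr (Setoid.quotientKerEquivRange I)]
  calc Nat.card (Set.range I) ≤ Nat.card (Fin n) :=
        Nat.card_le_card_of_injective _ Subtype.val_injective
    _ = n := by simp

/-- The kernel map into partitions with at most `n` classes. -/
def θ (m n : ℕ) : (Fin m → Fin n) → PartLE m n := fun I => ⟨Setoid.ker I, ker_card_le I⟩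

lemma θ_perm (σ : Equiv.Perm (Fin n)) (F : Fin m → Fin n) : θ m n (⇑σ ∘ F) = θ m n F := by
  refine Subtype.ext (Setoid.ext fun a b => ?_)
  exact σ.injective.eq_iff

lemma θ_surj : Function.Surjective (θ m n) := by
  classical
  rintro ⟨π, hπ⟩
  haveI : Fintype (Quotient π) := Fintype.ofFinite _
  have hcard : Fintype.card (Quotient π) ≤ Fintype.card (Fin n) := by
    rw [← Nat.card_eq_fintype_card, Fintype.card_fin]; exact hπ
  obtain ⟨e⟩ := Function.Embedding.nonempty_of_card_le hcard
  refine ⟨⇑e ∘ (Quotient.mk'' : Fin m → Quotient π), Subtype.ext ?_⟩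
  have : Setoid.ker (⇑e ∘ (Quotient.mk'' : Fin m → Quotient π))
      = Setoid.ker (Quotient.mk'' : Fin m → Quotient π) :=
    Setoid.ext fun a b => by
      simp only [Setoid.ker_def, Function.comp_apply, e.injective.eq_iff]
  show Setoid.ker _ = π
  rw [this, Setoid.ker_mk_eq]

lemma θ_eq_iff {I J : Fin m → Fin n} :
    θ m n I = θ m n J ↔ ∃ σ : Equiv.Perm (Fin n), ⇑σ ∘ I = J := by
  constructor
  · intro hIJ
    exact exists_perm_of_ker_eq (congrArg Subtype.val hIJ)
  · rintro ⟨σ, rfl⟩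
    exact (θ_perm σ I).symm

end Helpers

/-- `Bell m n`: the number of set partitions of `Fin m` (encoded as setoids,
i.e. equivalence relations) into at most `n` blocks. -/
def Bell (m n : ℕ) : ℕ :=
  Nat.card {π : Setoid (Fin m) // Nat.card (Quotient π) ≤ n}

/-- `BellAll m`: the total number of set partitions of `Fin m`. -/
def BellAll (m : ℕ) : ℕ := Nat.card (Setoid (Fin m))

/-- The space `End_{S_n}(M_n^{⊗k})` in the standard basis: matrices
`f : (Fin k → Fin n) × (Fin k → Fin n) → ℂ` with `f (σ ∘ I, σ ∘ J) = f (I, J)`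
for all `σ ∈ S_n`. -/
def MEnd (n k : ℕ) : Submodule ℂ ((Fin k → Fin n) × (Fin k → Fin n) → ℂ) where
  carrier := {f | ∀ (σ : Equiv.Perm (Fin n)) (I J : Fin k → Fin n),
    f (⇑σ ∘ I, ⇑σ ∘ J) = f (I, J)}
  add_mem' := by
    intro a b ha hb σ I J
    simp only [Pi.add_apply, ha σ I J, hb σ I J]
  zero_mem' := by intro σ I J; rfl
  smul_mem' := by
    intro c a ha σ I J
    simp only [Pi.smul_apply, ha σ I J]

/-- if `k ≥ 1` and `n < 2k` then `dim End_{S_n}(M_n^{⊗k}) = Bell(2k, n)`,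
which is strictly smaller than `Bell(2k)`; in particular `Bell(2k) - Bell(2k, n) > 0`. -/
theorem finrank_MEnd_lt_bellAll (k n : ℕ) (hk : 1 ≤ k) (hn : 1 ≤ n) (h : n < 2 * k) :
    Module.finrank ℂ ↥(MEnd n k) = Bell (2 * k) n ∧
    Bell (2 * k) n < BellAll (2 * k) ∧
    0 < BellAll (2 * k) - Bell (2 * k) n := by
  classical
  -- the equivalence between functions on `Fin (2*k)` and pairs of functions on `Fin k`
  set eidx : Fin (2 * k) ≃ (Fin k ⊕ Fin k) :=
    (finCongr (two_mul k)).trans finSumFinEquiv.symm with heidx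
  set D : (Fin (2 * k) → Fin n) ≃ ((Fin k → Fin n) × (Fin k → Fin n)) :=
    (Equiv.arrowCongr eidx (Equiv.refl (Fin n))).trans
      (Equiv.sumArrowEquivProdArrow _ _ _) with hDdef
  have hD : ∀ (σ : Equiv.Perm (Fin n)) (F : Fin (2 * k) → Fin n),
      D (⇑σ ∘ F) = (⇑σ ∘ (D F).1, ⇑σ ∘ (D F).2) := fun σ F => rfl
  set Θ : ((Fin k → Fin n) × (Fin k → Fin n)) → PartLE (2 * k) n :=
    fun p => θ (2 * k) n (D.symm p) with hΘdef
  have Θsurj : Function.Surjective Θ := θ_surj.comp D.symm.surjective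
  have hΘinv : ∀ (σ : Equiv.Perm (Fin n)) (I J : Fin k → Fin n),
      Θ (⇑σ ∘ I, ⇑σ ∘ J) = Θ (I, J) := by
    intro σ I J
    have h1 : (⇑σ ∘ I, ⇑σ ∘ J) = D (⇑σ ∘ D.symm (I, J)) := by
      rw [hD, Equiv.apply_symm_apply]
    rw [hΘdef]
    simp only [h1, Equiv.symm_apply_apply]
    exact θ_perm σ _
  -- f ∈ MEnd is constant on the fibers of Θ
  have hfib : ∀ f ∈ MEnd n k, ∀ p q, Θ p = Θ q → f p = f q := by
    intro f hf p q hpq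
    obtain ⟨σ, hσ⟩ := θ_eq_iff.mp hpq
    have h1 : D (⇑σ ∘ D.symm p) = q := by rw [hσ, Equiv.apply_symm_apply]
    rw [hD, Equiv.apply_symm_apply] at h1
    rw [← h1]
    exact ((hf σ p.1 p.2).trans (by rw [Prod.mk.eta])).symm
  set Φ : (PartLE (2 * k) n → ℂ) →ₗ[ℂ] ((Fin k → Fin n) × (Fin k → Fin n) → ℂ) :=
    { toFun := fun g p => g (Θ p),
      map_add' := fun _ _ => rfl,
      map_smul' := fun _ _ => rfl } with hΦdef
  have hΦinj : Function.Injective Φ := by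
    intro g₁ g₂ hg
    funext s
    obtain ⟨p, rfl⟩ := Θsurj s
    exact congrFun hg p
  have hrange : LinearMap.range Φ = MEnd n k := by
    apply le_antisymm
    · rintro _ ⟨g, rfl⟩ σ I J
      show g (Θ (⇑σ ∘ I, ⇑σ ∘ J)) = g (Θ (I, J))
      rw [hΘinv]
    · intro f hf
      refine ⟨fun s => f (Classical.choose (Θsurj s)), ?_⟩
      funext p
      show f (Classical.choose (Θsurj (Θ p))) = f p
      exact hfib f hf _ p (Classical.choose_spec (Θsurj (Θ p)))
  haveI : Fintype (Setoid (Fin (2 * k))) := Fintype.ofFinite _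
  have hdim : Module.finrank ℂ ↥(MEnd n k) = Bell (2 * k) n := by
    haveI : Fintype (PartLE (2 * k) n) := Fintype.ofFinite _
    rw [← hrange, ← (LinearEquiv.ofInjective Φ hΦinj).finrank_eq,
      Module.finrank_fintype_fun_eq_card]
    show Fintype.card (PartLE (2 * k) n) = Bell (2 * k) n
    rw [Bell, Nat.card_eq_fintype_card]
  have hker_id : Nat.card (Quotient (Setoid.ker (id : Fin (2 * k) → Fin (2 * k)))) = 2 * k := by
    rw [Nat.card_congr (Setoid.quotientKerEquivRange _), Set.range_id,
      Nat.card_congr (Equiv.Set.univ (Fin (2 * k))), Nat.card_eq_fintype_card, Fintype.card_fin]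
  have hlt : Bell (2 * k) n < BellAll (2 * k) := by
    have hx := Fintype.card_subtype_lt
      (p := fun π : Setoid (Fin (2 * k)) => Nat.card (Quotient π) ≤ n)
      (x := Setoid.ker (id : Fin (2 * k) → Fin (2 * k)))
      (by
        show ¬ Nat.card (Quotient (Setoid.ker (id : Fin (2 * k) → Fin (2 * k)))) ≤ n
        rw [hker_id]; omega)
    exact lt_of_eq_of_lt Nat.card_eq_fintype_card
      (lt_of_lt_of_eq hx Nat.card_eq_fintype_card.symm)
  exact ⟨hdim, hlt, Nat.sub_pos_of_lt hlt⟩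

end
end

section
/- Let k ≥ 0 and n ≥ 1. For each set partition π of Fin k into at most n blocks, define the function X_π : (Fin k → Fin n) → ℂ by X_π(J) = 1 if ker(J) = π and 0 otherwise. Then {X_π : π a set partition of Fin k with at most n blocks} is a basis of the complex vector space of functions f : (Fin k → Fin n) → ℂ satisfying f(σ ∘ J) = f(J) for all σ ∈ S_n; in particular this space of S_n-invariant functions (the space of k-order permutation invariant layer functions Hom_{S_n}(M_n^{⊗k}, M_n^{⊗0})) has dimension Bell(k, n). -/
noncomputable section
open scoped Classical

/-- The space `Hom_{S_n}(M_n^{⊗k}, M_n^{⊗0})` of `S_n`-invariant functions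
`f : (Fin k → Fin n) → ℂ`, i.e. those with `f (σ ∘ J) = f J` for all `σ ∈ S_n`. -/
def MInv (n k : ℕ) : Submodule ℂ ((Fin k → Fin n) → ℂ) where
  carrier := {f | ∀ (σ : Equiv.Perm (Fin n)) (J : Fin k → Fin n), f (⇑σ ∘ J) = f J}
  add_mem' := by
    intro a b ha hb σ J
    simp only [Pi.add_apply, ha σ J, hb σ J]
  zero_mem' := by intro σ J; rfl
  smul_mem' := by
    intro c a ha σ J
    simp only [Pi.smul_apply, ha σ J]

section Aux

variable {k n : ℕ}

lemma ker_comp_inj {α β γ : Type*} {g : β → γ} (hg : Function.Injective g) (f : α → β) :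
    Setoid.ker (g ∘ f) = Setoid.ker f := by
  ext x y
  simp only [Setoid.ker_def, Function.comp_apply]
  exact ⟨fun h => hg h, fun h => by rw [h]⟩

lemma ker_perm (σ : Equiv.Perm (Fin n)) (J : Fin k → Fin n) :
    Setoid.ker (⇑σ ∘ J) = Setoid.ker J :=
  ker_comp_inj σ.injective J

lemma card_quot_ker_le (J : Fin k → Fin n) :
    Nat.card (Quotient (Setoid.ker J)) ≤ n := by
  have e := Setoid.quotientKerEquivRange J
  rw [Nat.card_congr e]
  calc Nat.card ↑(Set.range J) ≤ Nat.card (Fin n) :=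
        Nat.card_le_card_of_injective _ Subtype.val_injective
    _ = n := by simp

lemma exists_rep (π : Setoid (Fin k)) (h : Nat.card (Quotient π) ≤ n) :
    ∃ J : Fin k → Fin n, Setoid.ker J = π := by
  haveI : Fintype (Quotient π) := Fintype.ofFinite _
  obtain ⟨g⟩ : Nonempty (Quotient π ↪ Fin n) := by
    apply Function.Embedding.nonempty_iff_card_le.mpr
    rw [Fintype.card_fin, ← Nat.card_eq_fintype_card]
    exact h
  refine ⟨g ∘ Quotient.mk'', ?_⟩
  rw [ker_comp_inj g.injective, Setoid.ker_mk_eq]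

/-- If two tuples have the same kernel, they differ by a permutation. -/
lemma exists_perm_comp (J J' : Fin k → Fin n) (h : Setoid.ker J = Setoid.ker J') :
    ∃ σ : Equiv.Perm (Fin n), ⇑σ ∘ J = J' := by
  have hiff : ∀ x y, J x = J y ↔ J' x = J' y := by
    intro x y
    rw [← Setoid.ker_def (f := J), ← Setoid.ker_def (f := J'), h]
  -- bijection between ranges
  have hf : ∀ y : Set.range J, ∃ z : Set.range J', ∀ x, J x = y → J' x = z := by
    rintro ⟨y, x, rfl⟩
    exact ⟨⟨J' x, x, rfl⟩, fun x' hx' => (hiff x' x).mp hx'⟩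
  choose F hF using hf
  have hFinj : Function.Injective F := by
    rintro ⟨y₁, x₁, rfl⟩ ⟨y₂, x₂, rfl⟩ hEq
    have h1 := hF ⟨J x₁, x₁, rfl⟩ x₁ rfl
    have h2 := hF ⟨J x₂, x₂, rfl⟩ x₂ rfl
    apply Subtype.ext
    exact (hiff x₁ x₂).mpr (by rw [h1, hEq, h2])
  have hFsurj : Function.Surjective F := by
    rintro ⟨y, x, rfl⟩
    exact ⟨⟨J x, x, rfl⟩, Subtype.ext (hF ⟨J x, x, rfl⟩ x rfl).symm⟩
  let e : ↥(Set.range J) ≃ ↥(Set.range J') := Equiv.ofBijective F ⟨hFinj, hFsurj⟩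
  have hcompl : Nonempty (↥(Set.range J)ᶜ ≃ ↥(Set.range J')ᶜ) := by
    haveI : Fintype ↥(Set.range J) := Fintype.ofFinite _
    haveI : Fintype ↥(Set.range J') := Fintype.ofFinite _
    haveI : Fintype ↥(Set.range J)ᶜ := Fintype.ofFinite _
    haveI : Fintype ↥(Set.range J')ᶜ := Fintype.ofFinite _
    apply Fintype.card_eq.mp
    have h1 : Fintype.card ↥(Set.range J) = Fintype.card ↥(Set.range J') :=
      Fintype.card_congr e
    have h2 : Fintype.card ↥(Set.range J)ᶜ
        = Fintype.card (Fin n) - Fintype.card ↥(Set.range J) := Fintype.card_compl_set _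
    have h3 : Fintype.card ↥(Set.range J')ᶜ
        = Fintype.card (Fin n) - Fintype.card ↥(Set.range J') := Fintype.card_compl_set _
    have h4 : Fintype.card ↥(Set.range J) ≤ Fintype.card (Fin n) :=
      Fintype.card_le_of_injective Subtype.val Subtype.val_injective
    have h5 : Fintype.card ↥(Set.range J') ≤ Fintype.card (Fin n) :=
      Fintype.card_le_of_injective Subtype.val Subtype.val_injective
    omega
  obtain ⟨ec⟩ := hcompl
  let σ : Equiv.Perm (Fin n) :=
    (Equiv.Set.sumCompl (Set.range J)).symm.trans
      ((e.sumCongr ec).trans (Equiv.Set.sumCompl (Set.range J')))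
  refine ⟨σ, funext fun x => ?_⟩
  have hmem : J x ∈ Set.range J := ⟨x, rfl⟩
  have hs : (Equiv.Set.sumCompl (Set.range J)).symm (J x) = Sum.inl ⟨J x, hmem⟩ :=
    Equiv.Set.sumCompl_symm_apply (x := ⟨J x, hmem⟩)
  have he : (e ⟨J x, hmem⟩ : Fin n) = J' x := by
    exact (hF ⟨J x, hmem⟩ x rfl).symm
  simp only [σ, Function.comp_apply, Equiv.trans_apply, hs, Equiv.sumCongr_apply,
    Sum.map_inl, Equiv.Set.sumCompl_apply_inl]
  exact he

end Aux

variable {k n : ℕ}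

/-- The linear equivalence between functions on partitions and invariant functions. -/
def psiEquiv (k n : ℕ) :
    ({π : Setoid (Fin k) // Nat.card (Quotient π) ≤ n} → ℂ) ≃ₗ[ℂ] ↥(MInv n k) where
  toFun c := ⟨fun J => c ⟨Setoid.ker J, card_quot_ker_le J⟩, by
    intro σ J
    simp only [ker_perm]⟩
  map_add' _ _ := rfl
  map_smul' _ _ := rfl
  invFun f := fun π => (f : (Fin k → Fin n) → ℂ) (Classical.choose (exists_rep π.1 π.2))
  left_inv c := by
    funext π
    have h := Classical.choose_spec (exists_rep π.1 π.2)
    simp only []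
    congr 1
    exact Subtype.ext h
  right_inv f := by
    apply Subtype.ext
    funext J
    have h := Classical.choose_spec (exists_rep (Setoid.ker J) (card_quot_ker_le J))
    obtain ⟨σ, hσ⟩ := exists_perm_comp _ J h
    simpa [hσ] using (f.2 σ (Classical.choose (exists_rep (Setoid.ker J) (card_quot_ker_le J)))).symm

/-- the functions `X_π`, for `π` a set partition of `Fin k` with at most
`n` blocks, where `X_π J = 1` if `ker J = π` and `0` otherwise, form a basis of the
space of `S_n`-invariant functions `(Fin k → Fin n) → ℂ`; in particular that space has
dimension `Bell(k, n)`. -/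
theorem MInv_basis (k n : ℕ) (hn : 1 ≤ n) :
    (∃ b : Module.Basis {π : Setoid (Fin k) // Nat.card (Quotient π) ≤ n} ℂ ↥(MInv n k),
      ∀ (π : {π : Setoid (Fin k) // Nat.card (Quotient π) ≤ n}) (J : Fin k → Fin n),
        (b π : (Fin k → Fin n) → ℂ) J =
          if Setoid.ker J = (π : Setoid (Fin k)) then 1 else 0) ∧
    Module.finrank ℂ ↥(MInv n k) = Bell k n := by
  haveI : Finite (Setoid (Fin k)) :=
    Finite.of_injective (fun s : Setoid (Fin k) => (s.r : Fin k → Fin k → Prop))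
      (fun a b h => Setoid.ext fun x y => by rw [show a.r = b.r from h])
  haveI : Fintype {π : Setoid (Fin k) // Nat.card (Quotient π) ≤ n} := Fintype.ofFinite _
  let b := (Pi.basisFun ℂ {π : Setoid (Fin k) // Nat.card (Quotient π) ≤ n}).map (psiEquiv k n)
  constructor
  · refine ⟨b, fun π J => ?_⟩
    have h1 : (b π : (Fin k → Fin n) → ℂ) J
        = (Pi.basisFun ℂ {π : Setoid (Fin k) // Nat.card (Quotient π) ≤ n}) π
            ⟨Setoid.ker J, card_quot_ker_le J⟩ := by
      rw [show b π = (psiEquiv k n) ((Pi.basisFun ℂ _) π) from Module.Basis.map_apply _ _ _]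
      rfl
    rw [h1, Pi.basisFun_apply, Pi.single_apply]
    by_cases h : Setoid.ker J = (π : Setoid (Fin k))
    · rw [if_pos (Subtype.ext h), if_pos h]
    · rw [if_neg (fun hc => h (congrArg Subtype.val hc)), if_neg h]
  · rw [Module.finrank_eq_card_basis b, Bell, Nat.card_eq_fintype_card]

end
end
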